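/- Let L ≥ 2, k = (k_1,…,k_L) with all k_ℓ ≥ 1, s = (s_1,…,s_L) with all s_ℓ ≥ 1, and suppose s_i = 1 for some index 1 ≤ i ≤ L−1. Define the merged architecture k̃ := (k_1,…,k_{i−1}, k_i + k_{i+1} − 1, k_{i+2},…,k_L) and s̃ := (s_1,…,s_{i−1}, s_{i+1},…,s_L). Then F(k,s) = F(k̃,s̃). -/

import Mathlib

/-- All monomials of `P` involve only `x^s` and `y^s`. -/
def MonoS (s : ℕ) (P : MvPolynomial (Fin 2) ℂ) : Prop :=
  ∀ m ∈ P.support, s ∣ m 0 ∧ s ∣ m 1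

/-- `S ℓ = s_1 ⋯ s_{ℓ-1}` (0-indexed: `Sp s i = ∏_{j<i} s j`, so `Sp s 0 = 1`). -/
def Sp (s : ℕ → ℕ) (i : ℕ) : ℕ := ∏ j ∈ Finset.range i, s j

/-- `F(k,s)`: homogeneous polynomials of degree `k-1` admitting a factorization
`P = P_L ⋯ P_1`, where `P_ℓ` is homogeneous of degree `S_ℓ(k_ℓ-1)` with all monomials
in `x^{S_ℓ}, y^{S_ℓ}` (layers are 0-indexed here). -/
def Fset (L : ℕ) (k s : ℕ → ℕ) : Set (MvPolynomial (Fin 2) ℂ) :=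
  { P | ∃ Q : ℕ → MvPolynomial (Fin 2) ℂ, P = ∏ i ∈ Finset.range L, Q i ∧
      ∀ i < L, (Q i).IsHomogeneous (Sp s i * (k i - 1)) ∧ MonoS (Sp s i) (Q i) }

open MvPolynomial

noncomputable section


lemma deg2 (d : Fin 2 →₀ ℕ) : d.degree = d 0 + d 1 := by
  rw [Finsupp.degree, ← Fin.sum_univ_two (f := fun j => d j)]
  exact Finset.sum_subset (Finset.subset_univ _)
    (fun x _ hx => Finsupp.notMem_support_iff.mp hx)

lemma homog_mem {P : MvPolynomial (Fin 2) ℂ} {n : ℕ} (h : P.IsHomogeneous n)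
    {m : Fin 2 →₀ ℕ} (hm : m ∈ P.support) : m 0 + m 1 = n := by
  have := h (mem_support_iff.mp hm)
  rwa [show (Finsupp.weight (1 : Fin 2 → ℕ)) = Finsupp.degree from Finsupp.degree_eq_weight_one.symm, deg2] at this

lemma fin2_decomp (m : Fin 2 →₀ ℕ) :
    m = Finsupp.single 0 (m 0) + Finsupp.single 1 (m 1) := by
  ext j
  fin_cases j <;> simp

/-- dehomogenization: X₀ ↦ X, X₁ ↦ 1 -/
def toUni : MvPolynomial (Fin 2) ℂ →ₐ[ℂ] Polynomial ℂ :=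
  MvPolynomial.aeval (fun j : Fin 2 => if j = 0 then Polynomial.X else 1)

lemma toUni_monomial (m : Fin 2 →₀ ℕ) (c : ℂ) :
    toUni (monomial m c) = Polynomial.C c * Polynomial.X ^ (m 0) := by
  simp only [toUni, aeval_monomial, Fin.prod_univ_two, Polynomial.algebraMap_eq]
  simp [mul_assoc]
  intro h; simp [h]

/-- homogenization at degree n -/
def homz (n : ℕ) (p : Polynomial ℂ) : MvPolynomial (Fin 2) ℂ :=
  ∑ j ∈ Finset.range (n+1),
    monomial (Finsupp.single 0 j + Finsupp.single 1 (n - j)) (p.coeff j)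

lemma homz_isHomogeneous (n : ℕ) (p : Polynomial ℂ) : (homz n p).IsHomogeneous n := by
  apply (homogeneousSubmodule (Fin 2) ℂ n).sum_mem
  intro j hj
  rw [Finset.mem_range] at hj
  rw [mem_homogeneousSubmodule]
  apply isHomogeneous_monomial
  rw [deg2]
  simp [Finsupp.single_apply]
  omega

lemma homz_add (n : ℕ) (p q : Polynomial ℂ) : homz n (p + q) = homz n p + homz n q := by
  rw [homz, homz, homz, ← Finset.sum_add_distrib]
  refine Finset.sum_congr rfl fun j _ => ?_
  rw [Polynomial.coeff_add, map_add]

lemma toUni_homz {n : ℕ} {p : Polynomial ℂ} (h : p.natDegree ≤ n) (hp : p ≠ 0) :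
    toUni (homz n p) = p := by
  rw [homz, map_sum]
  conv_rhs => rw [Polynomial.as_sum_range' p (n+1) (by omega)]
  refine Finset.sum_congr rfl fun j _ => ?_
  rw [toUni_monomial]
  simp [Polynomial.C_mul_X_pow_eq_monomial, Finsupp.single_apply]

lemma homz_toUni {n : ℕ} {P : MvPolynomial (Fin 2) ℂ} (h : P.IsHomogeneous n) :
    homz n (toUni P) = P := by
  conv_rhs => rw [← P.support_sum_monomial_coeff]
  conv_lhs => rw [← P.support_sum_monomial_coeff]
  rw [map_sum]
  have : ∀ {α : Type} (f : α → Polynomial ℂ) (s : Finset α), homz n (∑ x ∈ s, f x) = ∑ x ∈ s, homz n (f x) := by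
    intro α f s
    classical
    induction s using Finset.induction with
    | empty => simp [homz]
    | insert _ _ h ih => rw [Finset.sum_insert h, Finset.sum_insert h, homz_add, ih]
  rw [this (fun x => toUni (monomial x (coeff x P))) P.support]
  refine Finset.sum_congr rfl fun m hm => ?_
  have hmn := homog_mem h hm
  rw [toUni_monomial, homz]
  have hsum : ∀ j ∈ Finset.range (n+1),
      monomial (Finsupp.single 0 j + Finsupp.single 1 (n - j))
        ((Polynomial.C (coeff m P) * Polynomial.X ^ m 0).coeff j) =
      if j = m 0 then monomial m (coeff m P) else 0 := by
    intro j hj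
    rw [Polynomial.coeff_C_mul, Polynomial.coeff_X_pow]
    by_cases hj0 : j = m 0
    · subst hj0; simp only [if_pos rfl, mul_one]
      have h1 : Finsupp.single (0 : Fin 2) (m 0) + Finsupp.single (1 : Fin 2) (n - m 0) = m := by
        have h2 : n - m 0 = m 1 := by omega
        rw [h2]; exact (fin2_decomp m).symm
      rw [h1]
      simp
    · simp [hj0]
  rw [Finset.sum_congr rfl hsum, Finset.sum_ite_eq' (Finset.range (n+1)) (m 0)]
  rw [if_pos (Finset.mem_range.mpr (by omega))]

lemma toUni_natDegree_le {n : ℕ} {P : MvPolynomial (Fin 2) ℂ} (h : P.IsHomogeneous n) :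
    (toUni P).natDegree ≤ n := by
  conv_lhs => rw [← P.support_sum_monomial_coeff, map_sum]
  refine le_trans (Polynomial.natDegree_sum_le _ _) ?_
  rw [Finset.fold_max_le]
  refine ⟨Nat.zero_le _, fun m hm => ?_⟩
  rw [Function.comp, toUni_monomial]
  refine le_trans (Polynomial.natDegree_C_mul_le _ _) ?_
  rw [Polynomial.natDegree_X_pow]
  have := homog_mem h hm; omega

lemma homz_mul {a b : ℕ} {p q : Polynomial ℂ} (hp : p.natDegree ≤ a) (hq : q.natDegree ≤ b)
    (hp0 : p ≠ 0) (hq0 : q ≠ 0) :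
    homz (a + b) (p * q) = homz a p * homz b q := by
  have hh : (homz a p * homz b q).IsHomogeneous (a + b) :=
    (homz_isHomogeneous a p).mul (homz_isHomogeneous b q)
  have := homz_toUni hh
  rwa [map_mul, toUni_homz hp hp0, toUni_homz hq hq0] at this

lemma uni_split (p : Polynomial ℂ) (hp : p ≠ 0) (d1 d2 : ℕ) (h : p.natDegree ≤ d1 + d2) :
    ∃ p1 p2 : Polynomial ℂ, p = p1 * p2 ∧ p1 ≠ 0 ∧ p2 ≠ 0 ∧
      p1.natDegree ≤ d1 ∧ p2.natDegree ≤ d2 := by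
  have hsplit : p.Splits := IsAlgClosed.splits p
  have hcard : p.roots.card = p.natDegree := by
    have := hsplit.natDegree_eq_card_roots
    simpa using this.symm
  set l := p.roots.toList with hl
  have hlen : l.length = p.natDegree := by rw [hl, Multiset.length_toList, hcard]
  set a := min d1 p.natDegree with ha
  have hfact : p = Polynomial.C p.leadingCoeff *
      ((l.take a).map (fun r => Polynomial.X - Polynomial.C r)).prod *
      ((l.drop a).map (fun r => Polynomial.X - Polynomial.C r)).prod := by
    conv_lhs => rw [hsplit.eq_prod_roots]
    rw [mul_assoc, ← List.prod_append, ← List.map_append, List.take_append_drop]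
    congr 1
    conv_lhs => rw [← Multiset.coe_toList p.roots]
    rw [Multiset.map_coe, Multiset.prod_coe]
  refine ⟨Polynomial.C p.leadingCoeff *
      ((l.take a).map (fun r => Polynomial.X - Polynomial.C r)).prod,
      ((l.drop a).map (fun r => Polynomial.X - Polynomial.C r)).prod,
      by rw [← hfact], ?_, ?_, ?_, ?_⟩
  · apply mul_ne_zero
    · simpa [Polynomial.leadingCoeff_eq_zero] using hp
    · apply List.prod_ne_zero
      intro h0
      obtain ⟨r, _, hr⟩ := List.mem_map.mp h0
      exact Polynomial.X_sub_C_ne_zero r hr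
  · apply List.prod_ne_zero
    intro h0
    obtain ⟨r, _, hr⟩ := List.mem_map.mp h0
    exact Polynomial.X_sub_C_ne_zero r hr
  · refine le_trans (Polynomial.natDegree_C_mul_le _ _) ?_
    refine le_trans (Polynomial.natDegree_list_prod_le _) ?_
    refine le_trans (List.sum_le_card_nsmul _ 1 ?_) ?_
    · intro x hx
      obtain ⟨q, hq, hr⟩ := List.mem_map.mp hx
      obtain ⟨r, _, hrr⟩ := List.mem_map.mp hq
      rw [← hr, ← hrr, Polynomial.natDegree_X_sub_C]
    · simp only [List.length_map, List.length_take, smul_eq_mul, mul_one]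
      omega
  · refine le_trans (Polynomial.natDegree_list_prod_le _) ?_
    refine le_trans (List.sum_le_card_nsmul _ 1 ?_) ?_
    · intro x hx
      obtain ⟨q, hq, hr⟩ := List.mem_map.mp hx
      obtain ⟨r, _, hrr⟩ := List.mem_map.mp hq
      rw [← hr, ← hrr, Polynomial.natDegree_X_sub_C]
    · simp only [List.length_map, List.length_drop, smul_eq_mul, mul_one]
      omega

lemma hom_split {P : MvPolynomial (Fin 2) ℂ} (n1 n2 : ℕ) (hP : P.IsHomogeneous (n1 + n2)) :
    ∃ P1 P2 : MvPolynomial (Fin 2) ℂ, P = P1 * P2 ∧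
      P1.IsHomogeneous n1 ∧ P2.IsHomogeneous n2 := by
  by_cases h0 : P = 0
  · exact ⟨0, 0, by rw [h0, mul_zero], isHomogeneous_zero _ _ _, isHomogeneous_zero _ _ _⟩
  have hu0 : toUni P ≠ 0 := by
    intro hc
    apply h0
    rw [← homz_toUni hP, hc]
    simp [homz]
  obtain ⟨p1, p2, hfact, h1, h2, hd1, hd2⟩ :=
    uni_split (toUni P) hu0 n1 n2 (toUni_natDegree_le hP)
  exact ⟨homz n1 p1, homz n2 p2,
    by rw [← homz_mul hd1 hd2 h1 h2, ← hfact, homz_toUni hP],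
    homz_isHomogeneous _ _, homz_isHomogeneous _ _⟩

/-- scaling substitution X j ↦ X j ^ S -/
def scaleS (S : ℕ) : MvPolynomial (Fin 2) ℂ →ₐ[ℂ] MvPolynomial (Fin 2) ℂ :=
  MvPolynomial.aeval (fun j : Fin 2 => X j ^ S)

lemma monomial_eq_prod2 (m : Fin 2 →₀ ℕ) (c : ℂ) :
    (monomial m c : MvPolynomial (Fin 2) ℂ) = C c * X 0 ^ (m 0) * X 1 ^ (m 1) := by
  conv_lhs => rw [fin2_decomp m]
  rw [X_pow_eq_monomial, X_pow_eq_monomial, C_apply, monomial_mul, monomial_mul]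
  simp

lemma scaleS_monomial (S : ℕ) (m : Fin 2 →₀ ℕ) (c : ℂ) :
    scaleS S (monomial m c) = monomial (S • m) c := by
  rw [monomial_eq_prod2, monomial_eq_prod2]
  simp only [map_mul, map_pow, scaleS, aeval_C, aeval_X, Finsupp.smul_apply, smul_eq_mul,
    ← pow_mul, algebraMap_eq]
  try ring_nf

lemma scaleS_spec {S n : ℕ} {P : MvPolynomial (Fin 2) ℂ} (h : P.IsHomogeneous n) :
    (scaleS S P).IsHomogeneous (S * n) ∧ MonoS S (scaleS S P) := by
  have hrep : scaleS S P = ∑ m ∈ P.support, monomial (S • m) (coeff m P) := by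
    conv_lhs => rw [← P.support_sum_monomial_coeff, map_sum]
    exact Finset.sum_congr rfl fun m _ => scaleS_monomial S m _
  constructor
  · rw [hrep]
    apply (homogeneousSubmodule (Fin 2) ℂ (S * n)).sum_mem
    intro m hm
    rw [mem_homogeneousSubmodule]
    apply isHomogeneous_monomial
    rw [deg2]
    have := homog_mem h hm
    simp only [Finsupp.smul_apply, smul_eq_mul]
    rw [← Nat.mul_add, this]
  · intro m hm
    rw [hrep] at hm
    have := MvPolynomial.support_sum hm
    obtain ⟨d, _, hd⟩ := Finset.mem_biUnion.mp this
    have := MvPolynomial.support_monomial_subset hd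
    rw [Finset.mem_singleton] at this
    subst this
    exact ⟨⟨d 0, rfl⟩, ⟨d 1, rfl⟩⟩

lemma scaleS_surj {S n : ℕ} (hS : 0 < S) {P : MvPolynomial (Fin 2) ℂ}
    (h : P.IsHomogeneous (S * n)) (hM : MonoS S P) :
    ∃ P', P'.IsHomogeneous n ∧ scaleS S P' = P := by
  classical
  refine ⟨∑ m ∈ P.support, monomial (Finsupp.mapRange (· / S) (by simp) m) (coeff m P), ?_, ?_⟩
  · apply (homogeneousSubmodule (Fin 2) ℂ n).sum_mem
    intro m hm
    rw [mem_homogeneousSubmodule]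
    apply isHomogeneous_monomial
    rw [deg2]
    simp only [Finsupp.mapRange_apply]
    obtain ⟨⟨a, ha⟩, ⟨b, hb⟩⟩ := hM m hm
    have := homog_mem h hm
    rw [ha, hb]
    rw [Nat.mul_div_cancel_left a hS, Nat.mul_div_cancel_left b hS]
    nlinarith [this]
  · rw [map_sum]
    conv_rhs => rw [← P.support_sum_monomial_coeff]
    refine Finset.sum_congr rfl fun m hm => ?_
    rw [scaleS_monomial]
    have hd : S • Finsupp.mapRange (· / S) (by simp) m = m := by
      obtain ⟨⟨a, ha⟩, ⟨b, hb⟩⟩ := hM m hm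
      ext j
      rw [Finsupp.smul_apply, Finsupp.mapRange_apply, smul_eq_mul]
      fin_cases j
      · show S * (m 0 / S) = m 0
        rw [ha, Nat.mul_div_cancel_left a hS]
      · show S * (m 1 / S) = m 1
        rw [hb, Nat.mul_div_cancel_left b hS]
    rw [hd]

lemma split_monoS {S n1 n2 : ℕ} (hS : 0 < S) {P : MvPolynomial (Fin 2) ℂ}
    (hP : P.IsHomogeneous (S * (n1 + n2))) (hM : MonoS S P) :
    ∃ P1 P2 : MvPolynomial (Fin 2) ℂ, P = P1 * P2 ∧
      P1.IsHomogeneous (S * n1) ∧ MonoS S P1 ∧ P2.IsHomogeneous (S * n2) ∧ MonoS S P2 := by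
  obtain ⟨P', hP', hPP⟩ := scaleS_surj hS hP hM
  obtain ⟨Q1, Q2, hfact, h1, h2⟩ := hom_split n1 n2 hP'
  obtain ⟨h1h, h1m⟩ := scaleS_spec (S := S) h1
  obtain ⟨h2h, h2m⟩ := scaleS_spec (S := S) h2
  exact ⟨scaleS S Q1, scaleS S Q2, by rw [← map_mul, ← hfact, hPP], h1h, h1m, h2h, h2m⟩

lemma monoS_mul {S : ℕ} {P Q : MvPolynomial (Fin 2) ℂ} (hP : MonoS S P) (hQ : MonoS S Q) :
    MonoS S (P * Q) := by
  classical
  intro m hm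
  have hmem := MvPolynomial.support_mul P Q hm
  obtain ⟨a, ha, b, hb, hab⟩ := Finset.mem_add.mp hmem
  obtain ⟨h1, h2⟩ := hP a ha
  obtain ⟨h3, h4⟩ := hQ b hb
  subst hab
  exact ⟨dvd_add h1 h3, dvd_add h2 h4⟩

lemma prod_merge {M : Type*} [CommMonoid M] (f : ℕ → M) (i : ℕ) :
    ∀ n, i < n → ∏ j ∈ Finset.range (n+1), f j =
      ∏ j ∈ Finset.range n,
        (if j < i then f j else if j = i then f i * f (i+1) else f (j+1)) := by
  intro n
  induction n with
  | zero => omega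
  | succ n ih =>
    intro hin
    rw [Finset.prod_range_succ (n := n+1),
      Finset.prod_range_succ (f := fun j => if j < i then f j else if j = i then f i * f (i+1) else f (j+1))]
    by_cases h : i < n
    · rw [← ih h, if_neg (by omega), if_neg (by omega)]
    · have hin' : i = n := by omega
      subst hin'
      rw [if_neg (by omega), if_pos rfl, Finset.prod_range_succ, mul_assoc]
      congr 1
      exact Finset.prod_congr rfl fun j hj => by
        rw [if_pos (Finset.mem_range.mp hj)]

end

/-- Merging consecutive layers `i` and `i+1` (0-indexed) when `s i = 1`:
`k̃ = (k_1,…,k_{i-1}, k_i + k_{i+1} - 1, k_{i+2},…,k_L)` and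
`s̃ = (s_1,…,s_{i-1}, s_{i+1},…,s_L)` give the same set `F`. -/
theorem stmt_10 (L : ℕ) (hL : 2 ≤ L) (k s : ℕ → ℕ)
    (hk : ∀ j < L, 1 ≤ k j) (hs : ∀ j < L, 1 ≤ s j)
    (i : ℕ) (hi : i + 1 < L) (hsi : s i = 1)
    (kt st : ℕ → ℕ)
    (hkt : ∀ j, kt j = if j < i then k j else if j = i then k i + k (i + 1) - 1 else k (j + 1))
    (hst : ∀ j, st j = if j < i then s j else s (j + 1)) :
    Fset L k s = Fset (L - 1) kt st := by

  obtain ⟨n, rfl⟩ : ∃ n, L = n + 1 := ⟨L - 1, by omega⟩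
  have hn : i < n := by omega
  have hSp_lt : ∀ j, j ≤ i → Sp st j = Sp s j := fun j hj =>
    Finset.prod_congr rfl fun m hm => by
      rw [hst m, if_pos (lt_of_lt_of_le (Finset.mem_range.mp hm) hj)]
  have hSpi : Sp s (i+1) = Sp s i := by
    rw [Sp, Finset.prod_range_succ, hsi, mul_one]; rfl
  have hSp_ge : ∀ j, i ≤ j → Sp st j = Sp s (j+1) := by
    intro j hj
    induction j, hj using Nat.le_induction with
    | base => rw [hSp_lt i le_rfl, hSpi]
    | succ m hm ihm =>
      have h1 : Sp st (m+1) = Sp st m * st m := Finset.prod_range_succ _ _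
      have h2 : Sp s (m+2) = Sp s (m+1) * s (m+1) := Finset.prod_range_succ _ _
      rw [h1, h2, ihm, hst m, if_neg (by omega)]
  have hL1 : n + 1 - 1 = n := rfl
  ext P
  simp only [Fset, Set.mem_setOf_eq, hL1]
  constructor
  · rintro ⟨Q, rfl, hQ⟩
    refine ⟨fun j => if j < i then Q j else if j = i then Q i * Q (i+1) else Q (j+1),
      prod_merge Q i n hn, ?_⟩
    intro j hj
    rcases lt_trichotomy j i with hji | rfl | hji
    · simp only [if_pos hji]
      rw [hSp_lt j (le_of_lt hji), hkt j, if_pos hji]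
      exact hQ j (by omega)
    · simp only [lt_irrefl, if_false, if_pos rfl]
      have e1 : Sp st j = Sp s j := hSp_lt j le_rfl
      have hQ1 := hQ j (by omega)
      have hQ2 := hQ (j+1) (by omega)
      have e2 : Sp st j * (kt j - 1) = Sp s j * (k j - 1) + Sp s (j+1) * (k (j+1) - 1) := by
        rw [e1, hSpi, ← Nat.mul_add, hkt j, if_neg (lt_irrefl j), if_pos rfl]
        have := hk j (by omega)
        have := hk (j+1) (by omega)
        congr 1
        omega
      refine ⟨?_, ?_⟩
      · rw [e2]; exact hQ1.1.mul hQ2.1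
      · rw [e1]
        refine monoS_mul hQ1.2 ?_
        have := hQ2.2
        rwa [hSpi] at this
    · simp only [if_neg (by omega : ¬ j < i), if_neg (by omega : ¬ j = i)]
      rw [hSp_ge j (le_of_lt hji), hkt j, if_neg (by omega), if_neg (by omega)]
      exact hQ (j+1) (by omega)
  · rintro ⟨Q, rfl, hQ⟩
    have hSi_pos : 0 < Sp s i :=
      Finset.prod_pos fun j hj => hs j (by have := Finset.mem_range.mp hj; omega)
    have hQi := hQ i hn
    rw [hSp_lt i le_rfl] at hQi
    have hdeg : Sp s i * (kt i - 1) = Sp s i * ((k i - 1) + (k (i+1) - 1)) := by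
      rw [hkt i, if_neg (lt_irrefl i), if_pos rfl]
      have := hk i (by omega)
      have := hk (i+1) (by omega)
      congr 1
      omega
    rw [hdeg] at hQi
    obtain ⟨A, B, hAB, hA, hAm, hB, hBm⟩ := split_monoS hSi_pos hQi.1 hQi.2
    refine ⟨fun j => if j < i then Q j else if j = i then A else if j = i+1 then B else Q (j-1),
      ?_, ?_⟩
    · rw [prod_merge
        (fun j => if j < i then Q j else if j = i then A else if j = i+1 then B else Q (j-1)) i n hn]
      refine Finset.prod_congr rfl fun j hj => ?_
      rcases lt_trichotomy j i with hji | rfl | hji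
      · simp only [if_pos hji]
      · have e1 : ¬ (j + 1 < j) := by omega
        have e2 : ¬ (j + 1 = j) := by omega
        have e3 : ¬ (j = j + 1) := by omega
        simp only [lt_irrefl, if_false, if_true, eq_self_iff_true, e1, e2, e3, ite_true, ite_false]
        exact hAB
      · simp only [if_neg (by omega : ¬ j < i), if_neg (by omega : ¬ j = i),
          if_neg (by omega : ¬ j + 1 < i), if_neg (by omega : ¬ j + 1 = i),
          if_neg (by omega : ¬ j + 1 = i + 1), Nat.add_sub_cancel]
    · intro j hj
      rcases lt_trichotomy j i with hji | rfl | hji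
      · simp only [if_pos hji]
        have := hQ j (by omega)
        rwa [hSp_lt j (le_of_lt hji), hkt j, if_pos hji] at this
      · simp only [lt_irrefl, if_false, if_pos rfl]
        exact ⟨hA, hAm⟩
      · rcases eq_or_lt_of_le (Nat.succ_le_of_lt hji) with hji1 | hji1
        · simp only [if_neg (by omega : ¬ j < i), if_neg (by omega : ¬ j = i), if_pos hji1.symm]
          rw [← hji1, hSpi]
          exact ⟨hB, hBm⟩
        · simp only [if_neg (by omega : ¬ j < i), if_neg (by omega : ¬ j = i),
            if_neg (by omega : ¬ j = i + 1)]
          have := hQ (j-1) (by omega)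
          rw [hSp_ge (j-1) (by omega), hkt (j-1), if_neg (by omega), if_neg (by omega)] at this
          have hj1 : j - 1 + 1 = j := by omega
          rwa [hj1] at this
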